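/- The 'Batman' density B(x), defined on [-3,3] by B(x) = (3+x)/sqrt(3-2x-x^2) + (3-x)/sqrt(3+2x-x^2) for |x|<1, B(x) = (3-|x|)/sqrt(3+2|x|-x^2) for 1 ≤ |x| ≤ 3, and 0 otherwise, satisfies (1/(4π)) ∫_{-3}^{3} B(t) dt = 1; that is, B(t)/(4π) is a probability density on [-3,3]. -/

import Mathlib

open Real MeasureTheory

/-- The "Batman" density. -/
noncomputable def batman (x : ℝ) : ℝ :=
  if |x| < 1 then
    (3 + x) / Real.sqrt (3 - 2*x - x^2) + (3 - x) / Real.sqrt (3 + 2*x - x^2)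
  else if |x| ≤ 3 then
    (3 - |x|) / Real.sqrt (3 + 2*|x| - x^2)
  else 0

lemma sqrt_four' : Real.sqrt 4 = 2 := by
  rw [show (4:ℝ) = 2^2 by norm_num, Real.sqrt_sq (by norm_num)]

/-- antiderivative of `(3+x)/√(3-2x-x²)` -/
noncomputable def G1 (x : ℝ) : ℝ := 2 * Real.arcsin ((x+1)/2) - Real.sqrt (3-2*x-x^2)
/-- antiderivative of `(3-x)/√(3+2x-x²)` -/
noncomputable def G2 (x : ℝ) : ℝ := 2 * Real.arcsin ((x-1)/2) + Real.sqrt (3+2*x-x^2)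

lemma contG1 : Continuous G1 := by
  unfold G1
  continuity

lemma contG2 : Continuous G2 := by
  unfold G2
  continuity

lemma hasDerivAt_G1 {x : ℝ} (h : 0 < 3 - 2*x - x^2) :
    HasDerivAt G1 ((3+x)/Real.sqrt (3-2*x-x^2)) x := by
  have hx1 : -3 < x := by nlinarith
  have hx2 : x < 1 := by nlinarith
  set s : ℝ := Real.sqrt (3-2*x-x^2) with hs
  have hspos : 0 < s := Real.sqrt_pos.2 h
  have hssq : s^2 = 3-2*x-x^2 := Real.sq_sqrt h.le
  have inner : HasDerivAt (fun y : ℝ => (y+1)/2) (1/2) x := by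
    simpa using ((hasDerivAt_id x).add_const 1).div_const 2
  have harc : HasDerivAt (fun y => Real.arcsin ((y+1)/2))
      ((1 / Real.sqrt (1 - ((x+1)/2)^2)) * (1/2)) x :=
    (Real.hasDerivAt_arcsin (by intro hc; nlinarith [(div_eq_iff (by norm_num : (2:ℝ) ≠ 0)).1 hc])
      (by intro hc; nlinarith [(div_eq_iff (by norm_num : (2:ℝ) ≠ 0)).1 hc])).comp x inner
  have hinner2 : HasDerivAt (fun y : ℝ => 3-2*y-y^2) (-2-2*x) x := by
    have := ((hasDerivAt_id x).const_mul 2).const_sub 3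
    have h2 := (hasDerivAt_pow 2 x)
    exact (this.sub h2).congr_deriv (by norm_num)
  have hsq : HasDerivAt (fun y => Real.sqrt (3-2*y-y^2)) ((1/(2*s)) * (-2-2*x)) x :=
    (Real.hasDerivAt_sqrt h.ne').comp x hinner2
  have key : Real.sqrt (1 - ((x+1)/2)^2) = s/2 := by
    rw [show 1 - ((x+1)/2)^2 = (3-2*x-x^2)/4 by ring, Real.sqrt_div h.le, sqrt_four']
  have := (harc.const_mul 2).sub hsq
  refine this.congr_deriv ?_
  rw [key]
  field_simp
  nlinarith [hssq]

lemma hasDerivAt_G2 {x : ℝ} (h : 0 < 3 + 2*x - x^2) :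
    HasDerivAt G2 ((3-x)/Real.sqrt (3+2*x-x^2)) x := by
  have hx1 : -1 < x := by nlinarith
  have hx2 : x < 3 := by nlinarith
  set s : ℝ := Real.sqrt (3+2*x-x^2) with hs
  have hspos : 0 < s := Real.sqrt_pos.2 h
  have hssq : s^2 = 3+2*x-x^2 := Real.sq_sqrt h.le
  have inner : HasDerivAt (fun y : ℝ => (y-1)/2) (1/2) x := by
    simpa using ((hasDerivAt_id x).sub_const 1).div_const 2
  have harc : HasDerivAt (fun y => Real.arcsin ((y-1)/2))
      ((1 / Real.sqrt (1 - ((x-1)/2)^2)) * (1/2)) x :=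
    (Real.hasDerivAt_arcsin (by intro hc; nlinarith [(div_eq_iff (by norm_num : (2:ℝ) ≠ 0)).1 hc])
      (by intro hc; nlinarith [(div_eq_iff (by norm_num : (2:ℝ) ≠ 0)).1 hc])).comp x inner
  have hinner2 : HasDerivAt (fun y : ℝ => 3+2*y-y^2) (2-2*x) x := by
    have := ((hasDerivAt_id x).const_mul 2).const_add 3
    have h2 := (hasDerivAt_pow 2 x)
    exact (this.sub h2).congr_deriv (by norm_num)
  have hsq : HasDerivAt (fun y => Real.sqrt (3+2*y-y^2)) ((1/(2*s)) * (2-2*x)) x :=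
    (Real.hasDerivAt_sqrt h.ne').comp x hinner2
  have key : Real.sqrt (1 - ((x-1)/2)^2) = s/2 := by
    rw [show 1 - ((x-1)/2)^2 = (3+2*x-x^2)/4 by ring, Real.sqrt_div h.le, sqrt_four']
  have := (harc.const_mul 2).add hsq
  refine this.congr_deriv ?_
  rw [key]
  field_simp
  nlinarith [hssq]

noncomputable def f1 (x : ℝ) : ℝ := (3+x)/Real.sqrt (3-2*x-x^2)
noncomputable def f2 (x : ℝ) : ℝ := (3-x)/Real.sqrt (3+2*x-x^2)

lemma f1_nonneg {x : ℝ} (hx : -3 ≤ x) : 0 ≤ f1 x :=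
  div_nonneg (by linarith) (Real.sqrt_nonneg _)
lemma f2_nonneg {x : ℝ} (hx : x ≤ 3) : 0 ≤ f2 x :=
  div_nonneg (by linarith) (Real.sqrt_nonneg _)

lemma intLeft_integrable : IntervalIntegrable f1 volume (-3) (-1) := by
  apply intervalIntegral.intervalIntegrable_deriv_of_nonneg contG1.continuousOn
  · intro x hx
    rw [min_eq_left (by norm_num), max_eq_right (by norm_num)] at hx
    exact hasDerivAt_G1 (by nlinarith [hx.1, hx.2])
  · intro x hx
    rw [min_eq_left (by norm_num), max_eq_right (by norm_num)] at hx
    exact f1_nonneg hx.1.le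

lemma intLeft : ∫ x in (-3:ℝ)..(-1), f1 x = π - 2 := by
  unfold f1
  rw [intervalIntegral.integral_eq_sub_of_hasDerivAt_of_le (by norm_num) contG1.continuousOn
    (fun x hx => hasDerivAt_G1 (by nlinarith [hx.1, hx.2])) intLeft_integrable]
  unfold G1
  norm_num [Real.arcsin_zero, Real.arcsin_neg_one, sqrt_four']
  ring

lemma intRight_integrable : IntervalIntegrable f2 volume 1 3 := by
  apply intervalIntegral.intervalIntegrable_deriv_of_nonneg contG2.continuousOn
  · intro x hx
    rw [min_eq_left (by norm_num), max_eq_right (by norm_num)] at hx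
    exact hasDerivAt_G2 (by nlinarith [hx.1, hx.2])
  · intro x hx
    rw [min_eq_left (by norm_num), max_eq_right (by norm_num)] at hx
    exact f2_nonneg hx.2.le

lemma intRight : ∫ x in (1:ℝ)..3, f2 x = π - 2 := by
  unfold f2
  rw [intervalIntegral.integral_eq_sub_of_hasDerivAt_of_le (by norm_num) contG2.continuousOn
    (fun x hx => hasDerivAt_G2 (by nlinarith [hx.1, hx.2])) intRight_integrable]
  unfold G2
  norm_num [Real.arcsin_zero, Real.arcsin_one, sqrt_four']
  ring

lemma intMid_integrable : IntervalIntegrable (fun x => f1 x + f2 x) volume (-1) 1 := by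
  apply intervalIntegral.intervalIntegrable_deriv_of_nonneg (g := fun x => G1 x + G2 x)
    (contG1.add contG2).continuousOn
  · intro x hx
    rw [min_eq_left (by norm_num), max_eq_right (by norm_num)] at hx
    exact (hasDerivAt_G1 (by nlinarith [hx.1, hx.2])).add
      (hasDerivAt_G2 (by nlinarith [hx.1, hx.2]))
  · intro x hx
    rw [min_eq_left (by norm_num), max_eq_right (by norm_num)] at hx
    exact add_nonneg (f1_nonneg (by linarith [hx.1])) (f2_nonneg (by linarith [hx.2]))

lemma intMid : ∫ x in (-1:ℝ)..1, (f1 x + f2 x) = 2*π + 4 := by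
  unfold f1 f2
  rw [intervalIntegral.integral_eq_sub_of_hasDerivAt_of_le (f := fun x => G1 x + G2 x)
    (by norm_num) (contG1.add contG2).continuousOn
    (fun x hx => (hasDerivAt_G1 (by nlinarith [hx.1, hx.2])).add
      (hasDerivAt_G2 (by nlinarith [hx.1, hx.2]))) intMid_integrable]
  unfold G1 G2
  norm_num [Real.arcsin_zero, Real.arcsin_one, Real.arcsin_neg_one, sqrt_four']
  ring

lemma eqOnLeft : Set.EqOn batman f1 (Set.uIcc (-3) (-1)) := by
  intro x hx
  rw [Set.uIcc_of_le (by norm_num)] at hx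
  obtain ⟨h1, h2⟩ := hx
  have habs : |x| = -x := abs_of_nonpos (by linarith)
  simp only [batman, habs, f1]
  rw [if_neg (by intro hc; linarith), if_pos (by linarith)]
  have : 3 + 2*(-x) - x^2 = 3 - 2*x - x^2 := by ring
  rw [this]
  ring_nf

lemma eqOnRight : Set.EqOn batman f2 (Set.uIcc 1 3) := by
  intro x hx
  rw [Set.uIcc_of_le (by norm_num)] at hx
  obtain ⟨h1, h2⟩ := hx
  have habs : |x| = x := abs_of_nonneg (by linarith)
  simp only [batman, habs, f2]
  rw [if_neg (by intro hc; linarith), if_pos (by linarith)]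

lemma eqOnMid : Set.EqOn batman (fun x => f1 x + f2 x) (Set.uIcc (-1) 1) := by
  intro x hx
  rw [Set.uIcc_of_le (by norm_num)] at hx
  by_cases hlt : |x| < 1
  · simp only [batman, if_pos hlt, f1, f2]
  · have hone : |x| = 1 := le_antisymm (abs_le.2 ⟨hx.1, hx.2⟩) (not_lt.1 hlt)
    rcases (abs_eq (by norm_num : (0:ℝ) ≤ 1)).1 hone with h | h <;> subst h <;>
      simp only [batman, f1, f2] <;> norm_num [sqrt_four']

theorem batman_is_probability_density :
    (1 / (4 * π)) * ∫ t in (-3 : ℝ)..3, batman t = 1 := by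
  have hI1 : IntervalIntegrable batman volume (-3) (-1) :=
    intLeft_integrable.congr_ae (Filter.eventuallyEq_of_mem
      (self_mem_ae_restrict measurableSet_uIoc)
      fun x hx => (eqOnLeft (Set.uIoc_subset_uIcc hx)).symm)
  have hI2 : IntervalIntegrable batman volume (-1) 1 :=
    intMid_integrable.congr_ae (Filter.eventuallyEq_of_mem
      (self_mem_ae_restrict measurableSet_uIoc)
      fun x hx => (eqOnMid (Set.uIoc_subset_uIcc hx)).symm)
  have hI3 : IntervalIntegrable batman volume 1 3 :=
    intRight_integrable.congr_ae (Filter.eventuallyEq_of_mem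
      (self_mem_ae_restrict measurableSet_uIoc)
      fun x hx => (eqOnRight (Set.uIoc_subset_uIcc hx)).symm)
  have split : ∫ t in (-3:ℝ)..3, batman t =
      (∫ t in (-3:ℝ)..(-1), batman t) + (∫ t in (-1:ℝ)..1, batman t)
        + (∫ t in (1:ℝ)..3, batman t) := by
    rw [intervalIntegral.integral_add_adjacent_intervals hI1 hI2,
      intervalIntegral.integral_add_adjacent_intervals (hI1.trans hI2) hI3]
  rw [split, intervalIntegral.integral_congr eqOnLeft,
    intervalIntegral.integral_congr eqOnMid, intervalIntegral.integral_congr eqOnRight,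
    intLeft, intMid, intRight]
  have : (π - 2) + (2*π + 4) + (π - 2) = 4 * π := by ring
  rw [this]
  field_simp
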